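/- Let G be a discrete group and σ a multiplier on G. Then the commutant in B(l²(G)) of the set {L^σ_g : g ∈ G} of left σ-translations equals the von Neumann algebra generated by the right σ̄-translations {R^{σ̄}_g : g ∈ G} (i.e. it equals the double commutant {R^{σ̄}_g : g ∈ G}''). Symmetrically, the commutant of the set of right σ-translations {R^σ_g : g ∈ G} equals the von Neumann algebra generated by the left σ̄-translations {L^{σ̄}_g : g ∈ G}. -/

import Mathlib

open scoped ComplexConjugate

noncomputable section

/-- `l²(X)`, the Hilbert space of square-summable complex functions on `X`. -/
abbrev l2 (X : Type*) : Type _ := lp (fun _ : X => ℂ) 2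

/-- A (normalized) multiplier on a discrete group `G`: a `U(1)`-valued 2-cocycle. -/
def IsMultiplier {G : Type*} [Group G] (σ : G → G → ℂ) : Prop :=
  (∀ g h, ‖σ g h‖ = 1) ∧
  (∀ a b c, σ b c * σ a (b * c) = σ (a * b) c * σ a b) ∧
  (∀ g, σ 1 g = 1) ∧ (∀ g, σ g 1 = 1)

/-- `A` acts on `l²(G)^d` (realized as `l²(G × Fin d)`) as the matrix over the twisted
group algebra with coefficient matrices `a g` supported in the finite set `T`, i.e.
`(Af)(x) = ∑_h a(xh⁻¹) σ(xh⁻¹,h) f(h) = ∑_{g∈T} a(g) σ(g,g⁻¹x) f(g⁻¹x)`. -/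
def ActsAsTwisted {G : Type*} [Group G] (σ : G → G → ℂ) (d : ℕ) (T : Finset G)
    (a : G → Matrix (Fin d) (Fin d) ℂ)
    (A : l2 (G × Fin d) →L[ℂ] l2 (G × Fin d)) : Prop :=
  (∀ g, g ∉ T → a g = 0) ∧
  ∀ (f : l2 (G × Fin d)) (x : G) (i : Fin d),
    A f (x, i) = ∑ g ∈ T, ∑ j, a g i j * σ g (g⁻¹ * x) * f (g⁻¹ * x, j)

/-- `lam` is an eigenvalue of the bounded operator `A` on `l²(X)`. -/
def HasL2Eigenvalue {X : Type*} (A : l2 X →L[ℂ] l2 X) (lam : ℂ) : Prop :=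
  ∃ f : l2 X, f ≠ 0 ∧ A f = lam • f

/-- The `σ`-multiplier algebraic eigenvalue property: every matrix over the twisted group
algebra `ℚ̄(G,σ)` acting on `l²(G)^d` has only algebraic eigenvalues. -/
def HasMAEP (G : Type*) [Group G] (σ : G → G → ℂ) : Prop :=
  ∀ (d : ℕ) (T : Finset G) (a : G → Matrix (Fin d) (Fin d) ℂ),
    (∀ g i j, IsAlgebraic ℚ (a g i j)) →
    ∀ A : l2 (G × Fin d) →L[ℂ] l2 (G × Fin d), ActsAsTwisted σ d T a A →
    ∀ lam : ℂ, HasL2Eigenvalue A lam → IsAlgebraic ℚ lam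

/-- The (untwisted) algebraic eigenvalue property. -/
def HasAEP (G : Type*) [Group G] : Prop := HasMAEP G fun _ _ => 1

namespace CommutantAux

variable {G : Type*} [Group G] [DecidableEq G]

/-- delta function -/
def δ (g : G) : l2 G := lp.single 2 g (1 : ℂ)

lemma δ_apply (g x : G) : (δ g : l2 G) x = if x = g then 1 else 0 := by
  by_cases h : x = g
  · subst h; simp [δ, lp.single_apply_self]
  · simp [δ, lp.single_apply_ne 2 g _ h, h]

/-- evaluation at a point as a CLM -/
def ev (x : G) : l2 G →L[ℂ] ℂ :=
  LinearMap.mkContinuous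
    { toFun := fun f => f x
      map_add' := fun f g => congrFun (lp.coeFn_add f g) x
      map_smul' := fun c f => congrFun (lp.coeFn_smul c f) x } 1
    (fun f => by simpa using lp.norm_apply_le_norm (p := 2) (by norm_num) f x)

@[simp] lemma ev_apply (x : G) (f : l2 G) : ev x f = f x := rfl

lemma hasSum_apply_delta (A : l2 G →L[ℂ] l2 G) (f : l2 G) :
    HasSum (fun x => f x • A (δ x)) (A f) := by
  have h := (lp.hasSum_single (E := fun _ : G => ℂ) (p := 2) (by norm_num) f).mapL A
  refine HasSum.congr_fun h ?_
  intro x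
  rw [show lp.single 2 x (f x : ℂ) = f x • δ x by
        rw [δ, ← lp.single_smul]; simp [smul_eq_mul], map_smul]

lemma clm_ext_delta {A B : l2 G →L[ℂ] l2 G} (h : ∀ g, A (δ g) = B (δ g)) : A = B := by
  refine ContinuousLinearMap.ext fun f => ?_
  exact (hasSum_apply_delta A f).unique (by simpa only [h] using hasSum_apply_delta B f)

lemma key (τ : G → G → ℂ) (hτ : IsMultiplier τ)
    (L Rb : G → (l2 G →L[ℂ] l2 G))
    (hL : ∀ g f x, L g f x = τ g (g⁻¹ * x) * f (g⁻¹ * x))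
    (hRb : ∀ g f x, Rb g f x = conj (τ x g) * f (x * g)) :
    (Set.range L).centralizer = (Set.range Rb).centralizer.centralizer := by
  obtain ⟨habs, hcoc, hone1, hone2⟩ := hτ
  have hne : ∀ a b, τ a b ≠ 0 := fun a b h => by
    have := habs a b; rw [h] at this; simp at this
  have hconj : ∀ a b, (starRingEnd ℂ) (τ a b) = (τ a b)⁻¹ := fun a b =>
    eq_inv_of_mul_eq_one_left (by
      rw [mul_comm, Complex.mul_conj, Complex.normSq_eq_norm_sq, habs]; norm_num)
  have hunit : ∀ a b, τ a b * (starRingEnd ℂ) (τ a b) = 1 := fun a b => by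
    rw [Complex.mul_conj, Complex.normSq_eq_norm_sq, habs]; norm_num
  have hLδ : ∀ g x : G, L g (δ x) = τ g x • δ (g * x) := by
    intro g x
    refine lp.ext (funext fun y => ?_)
    rw [hL]
    by_cases hy : y = g * x
    · subst hy
      simp [δ_apply, inv_mul_cancel_left, lp.coeFn_smul, Pi.smul_apply, smul_eq_mul]
    · have hx : ¬ (g⁻¹ * y = x) := fun hh => hy (by rw [← hh, mul_inv_cancel_left])
      simp [δ_apply, hx, hy, lp.coeFn_smul, Pi.smul_apply]
  have hRδ : ∀ k x : G, Rb k (δ x) = conj (τ (x * k⁻¹) k) • δ (x * k⁻¹) := by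
    intro k x
    refine lp.ext (funext fun y => ?_)
    rw [hRb]
    by_cases hy : y = x * k⁻¹
    · subst hy
      simp [δ_apply, inv_mul_cancel_right, lp.coeFn_smul, Pi.smul_apply, smul_eq_mul]
    · have hx : ¬ (y * k = x) := fun hh => hy (by rw [← hh, mul_inv_cancel_right])
      simp [δ_apply, hx, hy, lp.coeFn_smul, Pi.smul_apply]
  refine Set.Subset.antisymm ?_ ?_
  · -- hard direction
    intro T hT S hS
    have hTL : ∀ g, L g * T = T * L g := fun g => hT _ ⟨g, rfl⟩
    have hSR : ∀ k, Rb k * S = S * Rb k := fun k => hS _ ⟨k, rfl⟩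
    set t := T (δ (1:G)) with ht
    set s := S (δ (1:G)) with hs
    have hTδ : ∀ g, T (δ g) = L g t := by
      intro g
      have h1 : (δ g : l2 G) = L g (δ 1) := by rw [hLδ, hone2, mul_one, one_smul]
      calc T (δ g) = (T * L g) (δ 1) := by
            rw [ContinuousLinearMap.mul_apply, ← h1]
        _ = (L g * T) (δ 1) := by rw [hTL]
        _ = L g t := rfl
    have hSδ : ∀ h : G, S (δ h) = τ h h⁻¹ • Rb h⁻¹ s := by
      intro h
      have h1 : (δ h : l2 G) = τ h h⁻¹ • Rb h⁻¹ (δ 1) := by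
        rw [hRδ]
        simp only [one_mul, inv_inv, smul_smul]
        rw [hunit, one_smul]
      calc S (δ h) = S (τ h h⁻¹ • Rb h⁻¹ (δ 1)) := by rw [← h1]
        _ = τ h h⁻¹ • (S * Rb h⁻¹) (δ 1) := by rw [map_smul]; rfl
        _ = τ h h⁻¹ • (Rb h⁻¹ * S) (δ 1) := by rw [hSR]
        _ = _ := rfl
    refine clm_ext_delta fun g => ?_
    simp only [ContinuousLinearMap.mul_apply]
    refine lp.ext (funext fun h => ?_)
    have HA : HasSum
        (fun y : G => t y * τ g y * τ (g*y) (g*y)⁻¹ *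
          (conj (τ h (g*y)⁻¹) * s (h * (g*y)⁻¹)))
        ((S (T (δ g))) h) := by
      rw [hTδ]
      have e1 := ((hasSum_apply_delta (L g) t).mapL S).mapL (ev h)
      refine e1.congr_fun fun y => ?_
      simp only [map_smul, hLδ, hSδ, smul_smul, ev_apply, lp.coeFn_smul, Pi.smul_apply,
        smul_eq_mul, hRb]
    have HB : HasSum
        (fun x : G => τ g g⁻¹ * (s x * conj (τ (x*g) g⁻¹) *
          (τ (x*g) ((x*g)⁻¹ * h) * t ((x*g)⁻¹ * h))))
        ((T (S (δ g))) h) := by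
      rw [hSδ, map_smul, lp.coeFn_smul, Pi.smul_apply, smul_eq_mul]
      have e2 := (((hasSum_apply_delta (Rb g⁻¹) s).mapL T).mapL (ev h)).mul_left (τ g g⁻¹)
      refine e2.congr_fun fun x => ?_
      simp only [map_smul, hRδ, inv_inv, hTδ, ev_apply, lp.coeFn_smul, Pi.smul_apply,
        smul_eq_mul, hL]
      ring
    let e : G ≃ G :=
      ⟨fun y => h * y⁻¹ * g⁻¹, fun x => (x * g)⁻¹ * h, fun y => by group, fun x => by group⟩
    have HB' := (e.hasSum_iff.mpr HB)
    refine HA.unique (HB'.congr_fun fun y => ?_)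
    show _ = τ g g⁻¹ * (s (h * y⁻¹ * g⁻¹) * conj (τ (h * y⁻¹ * g⁻¹ * g) g⁻¹) *
      (τ (h * y⁻¹ * g⁻¹ * g) ((h * y⁻¹ * g⁻¹ * g)⁻¹ * h) * t ((h * y⁻¹ * g⁻¹ * g)⁻¹ * h)))
    simp only [mul_inv_rev, inv_inv, mul_assoc, inv_mul_cancel, mul_one, one_mul,
      inv_mul_cancel_left, mul_inv_cancel_left]
    rw [hconj, hconj]
    have C1 := hcoc (h * y⁻¹) y (y⁻¹ * g⁻¹)
    have C2 := hcoc g y (y⁻¹ * g⁻¹)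
    simp only [mul_assoc, inv_mul_cancel, mul_one, one_mul, inv_mul_cancel_left,
      mul_inv_cancel_left] at C1 C2
    have u1 : (τ h (y⁻¹ * g⁻¹))⁻¹ * τ h (y⁻¹ * g⁻¹) = 1 := inv_mul_cancel₀ (hne _ _)
    have u2 : (τ (h * y⁻¹) g⁻¹)⁻¹ * τ (h * y⁻¹) g⁻¹ = 1 := inv_mul_cancel₀ (hne _ _)
    linear_combination
      (t y * s (h * (y⁻¹ * g⁻¹)) * (τ h (y⁻¹ * g⁻¹))⁻¹ * (τ (h * y⁻¹) g⁻¹)⁻¹ * τ g g⁻¹) * C1 -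
      (t y * s (h * (y⁻¹ * g⁻¹)) * (τ h (y⁻¹ * g⁻¹))⁻¹ * (τ (h * y⁻¹) g⁻¹)⁻¹ *
        τ (h * y⁻¹) g⁻¹) * C2 -
      (t y * s (h * (y⁻¹ * g⁻¹)) * τ g y * τ (g * y) (y⁻¹ * g⁻¹) * (τ h (y⁻¹ * g⁻¹))⁻¹) * u2 +
      (t y * s (h * (y⁻¹ * g⁻¹)) * τ g g⁻¹ * (τ (h * y⁻¹) g⁻¹)⁻¹ * τ (h * y⁻¹) y) * u1
  · -- easy direction
    have hsub : Set.range L ⊆ (Set.range Rb).centralizer := by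
      rintro _ ⟨g, rfl⟩ _ ⟨k, rfl⟩
      refine ContinuousLinearMap.ext fun f => lp.ext (funext fun x => ?_)
      simp only [ContinuousLinearMap.mul_apply, hRb, hL, mul_assoc]
      rw [hconj, hconj]
      have C := hcoc g (g⁻¹ * x) k
      simp only [mul_assoc, inv_mul_cancel, mul_one, one_mul, inv_mul_cancel_left,
        mul_inv_cancel_left] at C
      have u1 : (τ x k)⁻¹ * τ x k = 1 := inv_mul_cancel₀ (hne _ _)
      have u2 : (τ (g⁻¹ * x) k)⁻¹ * τ (g⁻¹ * x) k = 1 := inv_mul_cancel₀ (hne _ _)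
      linear_combination
        (f (g⁻¹ * (x * k)) * (τ x k)⁻¹ * (τ (g⁻¹ * x) k)⁻¹) * C -
        (f (g⁻¹ * (x * k)) * τ g (g⁻¹ * (x * k)) * (τ x k)⁻¹) * u2 +
        (f (g⁻¹ * (x * k)) * τ g (g⁻¹ * x) * (τ (g⁻¹ * x) k)⁻¹) * u1
    exact Set.centralizer_subset hsub

end CommutantAux

/-- **Commutant theorem.** For a discrete group `G` with multiplier `σ`, the commutant of
the set of left `σ`-translations on `l²(G)` is the von Neumann algebra generated by the
right `σ̄`-translations, i.e. their double commutant; and symmetrically the commutant of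
the right `σ`-translations is the double commutant of the left `σ̄`-translations. -/
theorem commutant_theorem {G : Type*} [Group G] (σ : G → G → ℂ) (hσ : IsMultiplier σ)
    (Lσ Rσ Lσbar Rσbar : G → (l2 G →L[ℂ] l2 G))
    (hL : ∀ g f x, Lσ g f x = σ g (g⁻¹ * x) * f (g⁻¹ * x))
    (hR : ∀ g f x, Rσ g f x = σ x g * f (x * g))
    (hLbar : ∀ g f x, Lσbar g f x = conj (σ g (g⁻¹ * x)) * f (g⁻¹ * x))
    (hRbar : ∀ g f x, Rσbar g f x = conj (σ x g) * f (x * g)) :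
    (Set.range Lσ).centralizer = (Set.range Rσbar).centralizer.centralizer ∧
    (Set.range Rσ).centralizer = (Set.range Lσbar).centralizer.centralizer := by
  classical
  have hσbar : IsMultiplier (fun a b => conj (σ a b)) := by
    obtain ⟨h1, h2, h3, h4⟩ := hσ
    exact ⟨fun g h => by simp [h1], fun a b c => by
        simp only [← map_mul]; rw [h2], fun g => by simp [h3], fun g => by simp [h4]⟩
  constructor
  · exact CommutantAux.key σ hσ Lσ Rσbar hL hRbar
  · have e2 := CommutantAux.key (fun a b => conj (σ a b)) hσbar Lσbar Rσ hLbar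
      (fun g f x => by rw [hR, Complex.conj_conj])
    calc (Set.range Rσ).centralizer
        = ((Set.range Rσ).centralizer.centralizer).centralizer :=
          (Set.centralizer_centralizer_centralizer _).symm
      _ = (Set.range Lσbar).centralizer.centralizer := by rw [← e2]
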